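/- Every chain C with respect to an alignment between P_hld(F) and P_hld(G) is finite and its last node C[|C|-1] is a partially deleted node, i.e., exactly one of its opening or closing parentheses is deleted by the alignment. -/

import Mathlib

/-- Rooted ordered labeled trees. -/
inductive LTree (α : Type) : Type where
  | node : α → List (LTree α) → LTree α

mutual
  /-- Number of nodes of a labeled tree. -/
  def tsize {α : Type} : LTree α → ℕ
    | .node _ ts => 1 + fsize ts
  /-- Number of nodes of a labeled forest. -/
  def fsize {α : Type} : List (LTree α) → ℕ
    | [] => 0
    | t :: ts => tsize t + fsize ts
end

mutual
  /-- Parenthesis representation of a tree: `(_a · str(children) · )_a`. -/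
  def pstr {α : Type} : LTree α → List (Bool × α)
    | .node a ts => (true, a) :: (pforest ts ++ [(false, a)])
  /-- Parenthesis representation of a forest. -/
  def pforest {α : Type} : List (LTree α) → List (Bool × α)
    | [] => []
    | t :: ts => pstr t ++ pforest ts
end

mutual
  /-- The pair `(o(u), c(u))` of positions, in the parenthesis representation,
  of the node `u` of a tree addressed by a list of child indices. -/
  def tpos {α : Type} : LTree α → List ℕ → Option (ℕ × ℕ)
    | t, [] => some (0, (pstr t).length - 1)
    | .node _ ts, k :: addr => (fpos ts (k :: addr)).map (fun p => (p.1 + 1, p.2 + 1))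
  /-- The pair `(o(u), c(u))` of positions of the node of a forest addressed by a
  nonempty list of child indices (the first index selects the tree). -/
  def fpos {α : Type} : List (LTree α) → List ℕ → Option (ℕ × ℕ)
    | [], _ => none
    | _ :: _, [] => none
    | t :: _, 0 :: addr => tpos t addr
    | t :: ts, (k + 1) :: addr =>
        (fpos ts (k :: addr)).map (fun p => (p.1 + (pstr t).length, p.2 + (pstr t).length))
end

mutual
  /-- The subtree of a tree at a given address. -/
  def tSub {α : Type} : LTree α → List ℕ → Option (LTree α)
    | t, [] => some t
    | .node _ ts, k :: addr => fSub ts (k :: addr)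
  /-- The subtree of a forest at a given (nonempty) address. -/
  def fSub {α : Type} : List (LTree α) → List ℕ → Option (LTree α)
    | [], _ => none
    | _ :: _, [] => none
    | t :: _, 0 :: addr => tSub t addr
    | _ :: ts, (k + 1) :: addr => fSub ts (k :: addr)
end

mutual
  /-- Embed a tree into trees labeled by `Option α` (no sentinels). -/
  def emb {α : Type} : LTree α → LTree (Option α)
    | .node a ts => .node (some a) (femb ts)
  def femb {α : Type} : List (LTree α) → List (LTree (Option α))
    | [] => []
    | t :: ts => emb t :: femb ts
end

/-- Replace each heavy child (heavy depth `n` equal to the parent's) by a sentinel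
node labeled `none`; keep light children verbatim. -/
def lightChildren {α : Type} (n : ℕ) : List (LTree α) → List (LTree (Option α))
  | [] => []
  | t :: ts =>
      (if Nat.log 2 (tsize t) = n then LTree.node none [] else emb t) ::
        lightChildren n ts

/-- The light subtree `F'(v)` : the subtree rooted at `v` with the subtree of its
heavy child (if any) replaced by a single sentinel node. -/
def lightSub {α : Type} : LTree α → LTree (Option α)
  | .node a ts => .node (some a) (lightChildren (Nat.log 2 (1 + fsize ts)) ts)

mutual
  /-- The modified (heavy-light) labeling: each node `v` is relabeled by the pair
  `(F'(v), heavy depth of F(v))`. -/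
  def hldTree {α : Type} : LTree α → LTree (LTree (Option α) × ℕ)
    | .node a ts =>
        .node (lightSub (.node a ts), Nat.log 2 (1 + fsize ts)) (hldForest ts)
  /-- The modified labeling of a forest. -/
  def hldForest {α : Type} : List (LTree α) → List (LTree (LTree (Option α) × ℕ))
    | [] => []
    | t :: ts => hldTree t :: hldForest ts
end

/-- Default chain entry. -/
def d0 : Bool × List ℕ := (true, [])

/-- A chain entry: a node of `F` (side `true`) or of `G` (side `false`),
given by its address. -/
abbrev Entry := Bool × List ℕ

/-- The positions `(o(u), c(u))` of the node represented by an entry, in the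
parenthesis representation of its own forest. -/
def posOf {β : Type} (HF HG : List (LTree β)) (e : Entry) : ℕ × ℕ :=
  (fpos (if e.1 then HF else HG) e.2).getD (0, 0)

/-- `i` (a position of `str(HF)`) and `j` (a position of `str(HG)`) are matched by
the alignment `M` : the pair is aligned and the two characters are equal. -/
def MatchedEq {β : Type} (HF HG : List (LTree β)) (M : List (ℕ × ℕ))
    (dflt : Bool × β) (i j : ℕ) : Prop :=
  (i, j) ∈ M ∧ (pforest HF).getD i dflt = (pforest HG).getD j dflt

/-- Condition of an opening chain: each `F`-side node matches its opening
parenthesis with the next node of the sequence and its closing parenthesis with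
the previous one. -/
def OpeningChainCond {β : Type} (HF HG : List (LTree β)) (M : List (ℕ × ℕ))
    (dflt : Bool × β) (C : List Entry) : Prop :=
  ∀ k, k < C.length → (C.getD k d0).1 = true →
    (k + 1 < C.length →
      MatchedEq HF HG M dflt (posOf HF HG (C.getD k d0)).1
        (posOf HF HG (C.getD (k + 1) d0)).1) ∧
    (0 < k →
      MatchedEq HF HG M dflt (posOf HF HG (C.getD k d0)).2
        (posOf HF HG (C.getD (k - 1) d0)).2)

/-- Condition of a closing chain: each `F`-side node matches its closing
parenthesis with the next node of the sequence and its opening parenthesis with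
the previous one. -/
def ClosingChainCond {β : Type} (HF HG : List (LTree β)) (M : List (ℕ × ℕ))
    (dflt : Bool × β) (C : List Entry) : Prop :=
  ∀ k, k < C.length → (C.getD k d0).1 = true →
    (k + 1 < C.length →
      MatchedEq HF HG M dflt (posOf HF HG (C.getD k d0)).2
        (posOf HF HG (C.getD (k + 1) d0)).2) ∧
    (0 < k →
      MatchedEq HF HG M dflt (posOf HF HG (C.getD k d0)).1
        (posOf HF HG (C.getD (k - 1) d0)).1)

/-- Core conditions of an extended chain (without maximality): at least three
nodes, valid addresses, alternation between the two forests, and the opening or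
closing matching conditions. -/
def ExtChainCore {β : Type} (HF HG : List (LTree β)) (M : List (ℕ × ℕ))
    (dflt : Bool × β) (C : List Entry) : Prop :=
  3 ≤ C.length ∧
  (∀ e ∈ C, (fpos (if e.1 then HF else HG) e.2).isSome = true) ∧
  (∀ k, k + 1 < C.length → (C.getD k d0).1 ≠ (C.getD (k + 1) d0).1) ∧
  (OpeningChainCond HF HG M dflt C ∨ ClosingChainCond HF HG M dflt C)

/-- The ancestor condition of a chain: `C[k]` is a proper ancestor of `C[k+2]`
(its address is a proper prefix of the address of `C[k+2]`). -/
def AncestorCond (C : List Entry) : Prop :=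
  ∀ k, k + 2 < C.length →
    (C.getD k d0).2 <+: (C.getD (k + 2) d0).2 ∧
      (C.getD k d0).2 ≠ (C.getD (k + 2) d0).2

/-- Core conditions of a chain (without maximality). -/
def ChainCore {β : Type} (HF HG : List (LTree β)) (M : List (ℕ × ℕ))
    (dflt : Bool × β) (C : List Entry) : Prop :=
  ExtChainCore HF HG M dflt C ∧ AncestorCond C

/-- A (maximal) chain: a maximal sequence satisfying the chain conditions. -/
def MaxChain {β : Type} (HF HG : List (LTree β)) (M : List (ℕ × ℕ))
    (dflt : Bool × β) (C : List Entry) : Prop :=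
  ChainCore HF HG M dflt C ∧
    (¬∃ e, ChainCore HF HG M dflt (C ++ [e])) ∧
    (¬∃ e, ChainCore HF HG M dflt (e :: C))

/-- An extended chain: an inclusion-wise maximal sequence satisfying the extended
chain conditions. -/
def MaxExtChain {β : Type} (HF HG : List (LTree β)) (M : List (ℕ × ℕ))
    (dflt : Bool × β) (C : List Entry) : Prop :=
  ExtChainCore HF HG M dflt C ∧
    (¬∃ e, ExtChainCore HF HG M dflt (C ++ [e])) ∧
    (¬∃ e, ExtChainCore HF HG M dflt (e :: C))

/-- The label of the root of a labeled tree. -/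
def treeLabel {β : Type} : LTree β → β
  | .node b _ => b

/-- Default character of a modified parenthesis representation. -/
def hldDflt (α : Type) : Bool × (LTree (Option α) × ℕ) :=
  (true, (LTree.node none [], 0))

/-- A monotone matching: index pairs strictly increasing in both coordinates. -/
def IsMatching (M : List (ℕ × ℕ)) : Prop :=
  M.Chain' (fun p q => p.1 < q.1 ∧ p.2 < q.2)

/-- A position `p` of the appropriate string is aligned by `M`
(`side = true` : a position of the first string; `side = false` : of the second). -/
def AlignedAt (side : Bool) (M : List (ℕ × ℕ)) (p : ℕ) : Prop :=
  if side then (∃ j, (p, j) ∈ M) else (∃ i, (i, p) ∈ M)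

section Infra
variable {β : Type}

theorem tsize_pos (t : LTree β) : 1 ≤ tsize t := by
  cases t with
  | node a ts => simp [tsize]

mutual
theorem pstr_len (t : LTree β) : (pstr t).length = 2 * tsize t := by
  cases t with
  | node a ts => simp [pstr, tsize, pforest_len ts]; ring
theorem pforest_len (ts : List (LTree β)) : (pforest ts).length = 2 * fsize ts := by
  cases ts with
  | nil => simp [pforest, fsize]
  | cons t ts => simp [pforest, fsize, pstr_len t, pforest_len ts]; ring
end

mutual
theorem tpos_spec (t : LTree β) (a : List ℕ) (o c : ℕ) (d : Bool × β)
    (h : tpos t a = some (o, c)) :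
    o < c ∧ c < (pstr t).length ∧
      ∃ lbl, (pstr t).getD o d = (true, lbl) ∧ (pstr t).getD c d = (false, lbl) := by
  cases t with
  | node lbl ts =>
    cases a with
    | nil =>
      simp only [tpos, Option.some.injEq, Prod.mk.injEq] at h
      obtain ⟨ho, hc⟩ := h
      have hl : (pstr (LTree.node lbl ts)).length = (pforest ts).length + 2 := by
        simp [pstr]
      refine ⟨by omega, by omega, lbl, ?_, ?_⟩
      · subst ho; simp [pstr]
      · have : c = (pforest ts).length + 1 := by omega
        subst this
        simp only [pstr, List.getD_cons_succ]
        rw [List.getD_append_right _ _ _ _ (le_refl _)]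
        simp
    | cons k rest =>
      simp only [tpos, Option.map_eq_some_iff] at h
      obtain ⟨⟨o', c'⟩, hf, hoc⟩ := h
      simp only [Prod.mk.injEq] at hoc
      obtain ⟨ho, hc⟩ := hoc
      obtain ⟨h1, h2, lbl', h3, h4⟩ := fpos_spec ts (k :: rest) o' c' d hf
      subst ho; subst hc
      refine ⟨by omega, by simp [pstr]; omega, lbl', ?_, ?_⟩
      · simp only [pstr, List.getD_cons_succ]
        rw [List.getD_append _ _ _ _ (by omega)]; exact h3
      · simp only [pstr, List.getD_cons_succ]
        rw [List.getD_append _ _ _ _ (by omega)]; exact h4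
theorem fpos_spec (ts : List (LTree β)) (a : List ℕ) (o c : ℕ) (d : Bool × β)
    (h : fpos ts a = some (o, c)) :
    o < c ∧ c < (pforest ts).length ∧
      ∃ lbl, (pforest ts).getD o d = (true, lbl) ∧ (pforest ts).getD c d = (false, lbl) := by
  match ts, a with
  | [], _ => simp [fpos] at h
  | t :: ts, [] => simp [fpos] at h
  | t :: ts, 0 :: rest =>
    simp only [fpos] at h
    obtain ⟨h1, h2, lbl, h3, h4⟩ := tpos_spec t rest o c d h
    refine ⟨h1, by simp [pforest]; omega, lbl, ?_, ?_⟩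
    · simp only [pforest]; rw [List.getD_append _ _ _ _ (by omega)]; exact h3
    · simp only [pforest]; rw [List.getD_append _ _ _ _ (by omega)]; exact h4
  | t :: ts, (k+1) :: rest =>
    simp only [fpos, Option.map_eq_some_iff] at h
    obtain ⟨⟨o', c'⟩, hf, hoc⟩ := h
    simp only [Prod.mk.injEq] at hoc
    obtain ⟨ho, hc⟩ := hoc
    obtain ⟨h1, h2, lbl, h3, h4⟩ := fpos_spec ts (k :: rest) o' c' d hf
    subst ho; subst hc
    refine ⟨by omega, by simp [pforest]; omega, lbl, ?_, ?_⟩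
    · simp only [pforest]
      rw [List.getD_append_right _ _ _ _ (by omega)]
      simpa using h3
    · simp only [pforest]
      rw [List.getD_append_right _ _ _ _ (by omega)]
      simpa using h4
end

end Infra
section Infra2
variable {β : Type}

theorem fpos_ne_nil (ts : List (LTree β)) (a : List ℕ) (p : ℕ × ℕ)
    (h : fpos ts a = some p) : ∃ k rest, a = k :: rest := by
  match ts, a with
  | [], _ => simp [fpos] at h
  | t :: ts, [] => simp [fpos] at h
  | t :: ts, k :: rest => exact ⟨k, rest, rfl⟩

mutual
theorem tchar_pos (t : LTree β) (d : Bool × β) (p : ℕ) (hp : p < (pstr t).length) :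
    ((((pstr t).getD p d).1 = true → ∃ a c, tpos t a = some (p, c)) ∧
     (((pstr t).getD p d).1 = false → ∃ a o, tpos t a = some (o, p))) := by
  cases t with
  | node lbl ts =>
    have hl : (pstr (LTree.node lbl ts)).length = (pforest ts).length + 2 := by simp [pstr]
    rcases Nat.eq_zero_or_pos p with hp0 | hp1
    · subst hp0
      constructor
      · intro _
        exact ⟨[], (pforest ts).length + 1, by simp [tpos, pstr]⟩
      · intro hch
        simp [pstr] at hch
    · rcases Nat.lt_or_ge p ((pforest ts).length + 1) with hpi | hpe
      · -- interior: p - 1 < (pforest ts).length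
        have hp1' : p - 1 < (pforest ts).length := by omega
        have hch : (pstr (LTree.node lbl ts)).getD p d = (pforest ts).getD (p - 1) d := by
          obtain ⟨q, hq⟩ : ∃ q, p = q + 1 := ⟨p - 1, by omega⟩
          subst hq
          simp only [pstr, List.getD_cons_succ]
          rw [List.getD_append _ _ _ _ (by omega)]
          simp
        rw [hch]
        obtain ⟨hT, hF⟩ := fchar_pos ts d (p - 1) hp1'
        constructor
        · intro h
          obtain ⟨a, c, ha⟩ := hT h
          obtain ⟨k, rest, hk⟩ := fpos_ne_nil ts a _ ha
          subst hk
          refine ⟨k :: rest, c + 1, ?_⟩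
          simp only [tpos, ha, Option.map_some]
          have : p - 1 + 1 = p := by omega
          simp [this]
        · intro h
          obtain ⟨a, o, ha⟩ := hF h
          obtain ⟨k, rest, hk⟩ := fpos_ne_nil ts a _ ha
          subst hk
          refine ⟨k :: rest, o + 1, ?_⟩
          simp only [tpos, ha, Option.map_some]
          have : p - 1 + 1 = p := by omega
          simp [this]
      · -- p = (pforest ts).length + 1 : closing of root
        have hpeq : p = (pforest ts).length + 1 := by omega
        subst hpeq
        have hch : (pstr (LTree.node lbl ts)).getD ((pforest ts).length + 1) d
            = (false, lbl) := by
          simp only [pstr, List.getD_cons_succ]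
          rw [List.getD_append_right _ _ _ _ (le_refl _)]
          simp
        rw [hch]
        constructor
        · intro h; simp at h
        · intro _
          exact ⟨[], 0, by simp [tpos, pstr]⟩
theorem fchar_pos (ts : List (LTree β)) (d : Bool × β) (p : ℕ)
    (hp : p < (pforest ts).length) :
    ((((pforest ts).getD p d).1 = true → ∃ a c, fpos ts a = some (p, c)) ∧
     (((pforest ts).getD p d).1 = false → ∃ a o, fpos ts a = some (o, p))) := by
  match ts with
  | [] => simp [pforest] at hp
  | t :: ts =>
    rcases Nat.lt_or_ge p (pstr t).length with hlt | hge
    · have hch : (pforest (t :: ts)).getD p d = (pstr t).getD p d := by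
        simp only [pforest]; rw [List.getD_append _ _ _ _ hlt]
      rw [hch]
      obtain ⟨hT, hF⟩ := tchar_pos t d p hlt
      constructor
      · intro h
        obtain ⟨a, c, ha⟩ := hT h
        exact ⟨0 :: a, c, by simp [fpos, ha]⟩
      · intro h
        obtain ⟨a, o, ha⟩ := hF h
        exact ⟨0 :: a, o, by simp [fpos, ha]⟩
    · have hp' : p - (pstr t).length < (pforest ts).length := by
        simp only [pforest, List.length_append] at hp; omega
      have hch : (pforest (t :: ts)).getD p d = (pforest ts).getD (p - (pstr t).length) d := by
        simp only [pforest]; rw [List.getD_append_right _ _ _ _ hge]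
      rw [hch]
      obtain ⟨hT, hF⟩ := fchar_pos ts d (p - (pstr t).length) hp'
      constructor
      · intro h
        obtain ⟨a, c, ha⟩ := hT h
        obtain ⟨k, rest, hk⟩ := fpos_ne_nil ts a _ ha
        subst hk
        refine ⟨(k+1) :: rest, c + (pstr t).length, ?_⟩
        simp only [fpos, ha, Option.map_some]
        have : p - (pstr t).length + (pstr t).length = p := by omega
        simp [this]
      · intro h
        obtain ⟨a, o, ha⟩ := hF h
        obtain ⟨k, rest, hk⟩ := fpos_ne_nil ts a _ ha
        subst hk
        refine ⟨(k+1) :: rest, o + (pstr t).length, ?_⟩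
        simp only [fpos, ha, Option.map_some]
        have : p - (pstr t).length + (pstr t).length = p := by omega
        simp [this]
end

end Infra2
section Infra3
variable {β : Type}

mutual
theorem tnest (t : LTree β) (a b : List ℕ) (oa ca ob cb : ℕ)
    (ha : tpos t a = some (oa, ca)) (hb : tpos t b = some (ob, cb))
    (h : (oa < ob ∧ ob < ca) ∨ (oa < cb ∧ cb < ca)) : a <+: b ∧ a ≠ b := by
  cases t with
  | node lbl ts =>
    cases a with
    | nil =>
      simp only [tpos, Option.some.injEq, Prod.mk.injEq] at ha
      obtain ⟨hoa, hca⟩ := ha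
      cases b with
      | nil =>
        simp only [tpos, Option.some.injEq, Prod.mk.injEq] at hb
        omega
      | cons k rest => exact ⟨⟨k :: rest, rfl⟩, by simp⟩
    | cons k rest =>
      simp only [tpos, Option.map_eq_some_iff] at ha
      obtain ⟨⟨oa', ca'⟩, hfa, hpa⟩ := ha
      simp only [Prod.mk.injEq] at hpa
      have hspa := fpos_spec ts (k :: rest) oa' ca' (true, lbl) hfa
      cases b with
      | nil =>
        simp only [tpos, Option.some.injEq, Prod.mk.injEq] at hb
        have hl : (pstr (LTree.node lbl ts)).length = (pforest ts).length + 2 := by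
          simp [pstr]
        omega
      | cons k2 rest2 =>
        simp only [tpos, Option.map_eq_some_iff] at hb
        obtain ⟨⟨ob', cb'⟩, hfb, hpb⟩ := hb
        simp only [Prod.mk.injEq] at hpb
        have := fnest ts (k :: rest) (k2 :: rest2) oa' ca' ob' cb' hfa hfb (by omega)
        exact this
theorem fnest (ts : List (LTree β)) (a b : List ℕ) (oa ca ob cb : ℕ)
    (ha : fpos ts a = some (oa, ca)) (hb : fpos ts b = some (ob, cb))
    (h : (oa < ob ∧ ob < ca) ∨ (oa < cb ∧ cb < ca)) : a <+: b ∧ a ≠ b := by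
  match ts, a, b with
  | [], _, _ => simp [fpos] at ha
  | t :: ts, [], _ => simp [fpos] at ha
  | t :: ts, _, [] => simp [fpos] at hb
  | t :: ts, 0 :: ra, 0 :: rb =>
    simp only [fpos] at ha hb
    have := tnest t ra rb oa ca ob cb ha hb h
    constructor
    · exact List.cons_prefix_cons.2 ⟨rfl, this.1⟩
    · simp only [ne_eq, List.cons.injEq]; tauto
  | t :: ts, 0 :: ra, (k2+1) :: rb =>
    simp only [fpos] at ha
    simp only [fpos, Option.map_eq_some_iff] at hb
    obtain ⟨⟨ob', cb'⟩, hfb, hpb⟩ := hb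
    simp only [Prod.mk.injEq] at hpb
    have hsa := tpos_spec t ra oa ca (true, treeLabel t) ha
    omega
  | t :: ts, (k+1) :: ra, 0 :: rb =>
    simp only [fpos] at hb
    simp only [fpos, Option.map_eq_some_iff] at ha
    obtain ⟨⟨oa', ca'⟩, hfa, hpa⟩ := ha
    simp only [Prod.mk.injEq] at hpa
    have hsb := tpos_spec t rb ob cb (true, treeLabel t) hb
    omega
  | t :: ts, (k+1) :: ra, (k2+1) :: rb =>
    simp only [fpos, Option.map_eq_some_iff] at ha hb
    obtain ⟨⟨oa', ca'⟩, hfa, hpa⟩ := ha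
    obtain ⟨⟨ob', cb'⟩, hfb, hpb⟩ := hb
    simp only [Prod.mk.injEq] at hpa hpb
    have := fnest ts (k :: ra) (k2 :: rb) oa' ca' ob' cb' hfa hfb (by omega)
    obtain ⟨hpre, hne⟩ := this
    obtain ⟨hk, hrr⟩ := List.cons_prefix_cons.1 hpre
    subst hk
    constructor
    · exact List.cons_prefix_cons.2 ⟨rfl, hrr⟩
    · simp only [ne_eq, List.cons.injEq] at hne ⊢; tauto
end

mutual
theorem tpos_mono (t : LTree β) (a b : List ℕ) (oa ca ob cb : ℕ)
    (ha : tpos t a = some (oa, ca)) (hb : tpos t b = some (ob, cb))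
    (hpre : a <+: b) (hne : a ≠ b) : oa < ob ∧ cb < ca := by
  cases t with
  | node lbl ts =>
    cases a with
    | nil =>
      simp only [tpos, Option.some.injEq, Prod.mk.injEq] at ha
      obtain ⟨hoa, hca⟩ := ha
      cases b with
      | nil => exact absurd rfl hne
      | cons k rest =>
        simp only [tpos, Option.map_eq_some_iff] at hb
        obtain ⟨⟨ob', cb'⟩, hfb, hpb⟩ := hb
        simp only [Prod.mk.injEq] at hpb
        have hsb := fpos_spec ts (k :: rest) ob' cb' (true, lbl) hfb
        have hl : (pstr (LTree.node lbl ts)).length = (pforest ts).length + 2 := by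
          simp [pstr]
        omega
    | cons k rest =>
      cases b with
      | nil => simp at hpre
      | cons k2 rest2 =>
        obtain ⟨hk, hrr⟩ := List.cons_prefix_cons.1 hpre
        subst hk
        simp only [tpos, Option.map_eq_some_iff] at ha hb
        obtain ⟨⟨oa', ca'⟩, hfa, hpa⟩ := ha
        obtain ⟨⟨ob', cb'⟩, hfb, hpb⟩ := hb
        simp only [Prod.mk.injEq] at hpa hpb
        have := fpos_mono ts (k :: rest) (k :: rest2) oa' ca' ob' cb' hfa hfb
          (List.cons_prefix_cons.2 ⟨rfl, hrr⟩) (by simp; intro h; exact hne (by rw [h]))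
        omega
theorem fpos_mono (ts : List (LTree β)) (a b : List ℕ) (oa ca ob cb : ℕ)
    (ha : fpos ts a = some (oa, ca)) (hb : fpos ts b = some (ob, cb))
    (hpre : a <+: b) (hne : a ≠ b) : oa < ob ∧ cb < ca := by
  match ts, a, b with
  | [], _, _ => simp [fpos] at ha
  | t :: ts, [], _ => simp [fpos] at ha
  | t :: ts, _, [] => simp [fpos] at hb
  | t :: ts, 0 :: ra, 0 :: rb =>
    simp only [fpos] at ha hb
    exact tpos_mono t ra rb oa ca ob cb ha hb (List.cons_prefix_cons.1 hpre).2
      (by simp at hne; intro h; exact hne (by rw [h]))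
  | t :: ts, 0 :: ra, (k2+1) :: rb =>
    obtain ⟨hk, _⟩ := List.cons_prefix_cons.1 hpre
    omega
  | t :: ts, (k+1) :: ra, 0 :: rb =>
    obtain ⟨hk, _⟩ := List.cons_prefix_cons.1 hpre
    omega
  | t :: ts, (k+1) :: ra, (k2+1) :: rb =>
    obtain ⟨hk, hrr⟩ := List.cons_prefix_cons.1 hpre
    have hk' : k = k2 := by omega
    subst hk'
    simp only [fpos, Option.map_eq_some_iff] at ha hb
    obtain ⟨⟨oa', ca'⟩, hfa, hpa⟩ := ha
    obtain ⟨⟨ob', cb'⟩, hfb, hpb⟩ := hb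
    simp only [Prod.mk.injEq] at hpa hpb
    have := fpos_mono ts (k :: ra) (k :: rb) oa' ca' ob' cb' hfa hfb
      (List.cons_prefix_cons.2 ⟨rfl, hrr⟩) (by simp at hne ⊢; intro h; exact hne (by rw [h]))
    omega
end

theorem match_mono {M : List (ℕ × ℕ)} (hM : IsMatching M)
    {i j i' j' : ℕ} (h1 : (i, j) ∈ M) (h2 : (i', j') ∈ M) : (i < i' ↔ j < j') := by
  have : IsTrans (ℕ × ℕ) (fun p q => p.1 < q.1 ∧ p.2 < q.2) :=
    ⟨fun a b c hab hbc => ⟨hab.1.trans hbc.1, hab.2.trans hbc.2⟩⟩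
  have pw := (List.isChain_iff_pairwise).1 hM
  have pw2 : M.Pairwise (fun p q => (p.1 < q.1 ∧ p.2 < q.2) ∨ (q.1 < p.1 ∧ q.2 < p.2)) :=
    pw.imp (fun h => Or.inl h)
  have sym : Symmetric (fun p q : ℕ × ℕ => (p.1 < q.1 ∧ p.2 < q.2) ∨ (q.1 < p.1 ∧ q.2 < p.2)) :=
    fun a b h => h.symm
  by_cases he : (i, j) = (i', j')
  · simp_all
  · have := (letI : Std.Symm (fun p q : ℕ × ℕ => (p.1 < q.1 ∧ p.2 < q.2) ∨ (q.1 < p.1 ∧ q.2 < p.2)) := ⟨fun a b h => sym h⟩; List.Pairwise.forall pw2 h1 h2 he)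
    simp only [Prod.mk.injEq, not_and] at he this
    omega

end Infra3
section Append
variable {β : Type} {HF HG : List (LTree β)} {M : List (ℕ × ℕ)} {d : Bool × β}

theorem getD_append_lt (C : List Entry) (v : Entry) {k : ℕ} (hk : k < C.length) :
    (C ++ [v]).getD k d0 = C.getD k d0 :=
  List.getD_append _ _ _ _ hk

theorem getD_append_last (C : List Entry) (v : Entry) :
    (C ++ [v]).getD C.length d0 = v := by
  rw [List.getD_append_right _ _ _ _ (le_refl _)]
  simp

theorem open_append {C : List Entry} {v : Entry}
    (hC : OpeningChainCond HF HG M d C) (hlen : 1 ≤ C.length)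
    (hnew : (C.getD (C.length - 1) d0).1 = true →
      MatchedEq HF HG M d (posOf HF HG (C.getD (C.length - 1) d0)).1 (posOf HF HG v).1)
    (hnew2 : v.1 = true →
      MatchedEq HF HG M d (posOf HF HG v).2 (posOf HF HG (C.getD (C.length - 1) d0)).2) :
    OpeningChainCond HF HG M d (C ++ [v]) := by
  intro k hk hside
  rw [List.length_append, List.length_singleton] at hk
  rcases Nat.lt_or_ge k C.length with hkl | hke
  · rw [getD_append_lt C v hkl] at hside ⊢
    constructor
    · intro hk1
      rw [List.length_append, List.length_singleton] at hk1
      rcases Nat.lt_or_ge (k + 1) C.length with h1 | h1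
      · rw [getD_append_lt C v h1]
        exact (hC k hkl hside).1 h1
      · have hkeq : k = C.length - 1 := by omega
        have : k + 1 = C.length := by omega
        rw [this, getD_append_last C v]
        subst hkeq
        exact hnew hside
    · intro h0
      rw [getD_append_lt C v (show k - 1 < C.length by omega)]
      exact (hC k hkl hside).2 h0
  · have hkeq : k = C.length := by omega
    subst hkeq
    rw [getD_append_last C v] at hside ⊢
    constructor
    · intro hk1
      rw [List.length_append, List.length_singleton] at hk1
      omega
    · intro _
      rw [getD_append_lt C v (show C.length - 1 < C.length by omega)]
      exact hnew2 hside

theorem close_append {C : List Entry} {v : Entry}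
    (hC : ClosingChainCond HF HG M d C) (hlen : 1 ≤ C.length)
    (hnew : (C.getD (C.length - 1) d0).1 = true →
      MatchedEq HF HG M d (posOf HF HG (C.getD (C.length - 1) d0)).2 (posOf HF HG v).2)
    (hnew2 : v.1 = true →
      MatchedEq HF HG M d (posOf HF HG v).1 (posOf HF HG (C.getD (C.length - 1) d0)).1) :
    ClosingChainCond HF HG M d (C ++ [v]) := by
  intro k hk hside
  rw [List.length_append, List.length_singleton] at hk
  rcases Nat.lt_or_ge k C.length with hkl | hke
  · rw [getD_append_lt C v hkl] at hside ⊢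
    constructor
    · intro hk1
      rw [List.length_append, List.length_singleton] at hk1
      rcases Nat.lt_or_ge (k + 1) C.length with h1 | h1
      · rw [getD_append_lt C v h1]
        exact (hC k hkl hside).1 h1
      · have hkeq : k = C.length - 1 := by omega
        have : k + 1 = C.length := by omega
        rw [this, getD_append_last C v]
        subst hkeq
        exact hnew hside
    · intro h0
      rw [getD_append_lt C v (show k - 1 < C.length by omega)]
      exact (hC k hkl hside).2 h0
  · have hkeq : k = C.length := by omega
    subst hkeq
    rw [getD_append_last C v] at hside ⊢
    constructor
    · intro hk1
      rw [List.length_append, List.length_singleton] at hk1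
      omega
    · intro _
      rw [getD_append_lt C v (show C.length - 1 < C.length by omega)]
      exact hnew2 hside

theorem chaincore_append {C : List Entry} (hC : ChainCore HF HG M d C) (v : Entry)
    (hside : (C.getD (C.length - 1) d0).1 ≠ v.1)
    (hval : (fpos (if v.1 then HF else HG) v.2).isSome = true)
    (hanc : (C.getD (C.length - 2) d0).2 <+: v.2 ∧ (C.getD (C.length - 2) d0).2 ≠ v.2)
    (hcond : OpeningChainCond HF HG M d (C ++ [v]) ∨ ClosingChainCond HF HG M d (C ++ [v])) :
    ChainCore HF HG M d (C ++ [v]) := by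
  obtain ⟨⟨hlen, hv, halt, _⟩, hancC⟩ := hC
  refine ⟨⟨?_, ?_, ?_, hcond⟩, ?_⟩
  · rw [List.length_append, List.length_singleton]; omega
  · intro e he
    rw [List.mem_append] at he
    rcases he with he | he
    · exact hv e he
    · simp only [List.mem_singleton] at he; subst he; exact hval
  · intro k hk
    rw [List.length_append, List.length_singleton] at hk
    rcases Nat.lt_or_ge (k + 1) C.length with h1 | h1
    · rw [getD_append_lt C v (by omega), getD_append_lt C v h1]
      exact halt k h1
    · have hkeq : k = C.length - 1 := by omega
      have h2 : k + 1 = C.length := by omega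
      rw [h2, getD_append_last C v, getD_append_lt C v (by omega), hkeq]
      exact hside
  · intro k hk
    rw [List.length_append, List.length_singleton] at hk
    rcases Nat.lt_or_ge (k + 2) C.length with h1 | h1
    · rw [getD_append_lt C v (by omega), getD_append_lt C v h1]
      exact hancC k h1
    · have h2 : k + 2 = C.length := by omega
      have hkeq : k = C.length - 2 := by omega
      rw [h2, getD_append_last C v, getD_append_lt C v (by omega), hkeq]
      exact hanc

end Append
/-- Every chain `C` with respect to a (deletion-only) alignment between
`P_hld(F)` and `P_hld(G)` is finite (it is a list), and its last node
`C[|C|-1]` is partially deleted: exactly one of its opening and closing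
parentheses is aligned, and the other one is deleted. -/
theorem stmt14 {α : Type} (F G : List (LTree α)) (M : List (ℕ × ℕ))
    (C : List Entry)
    (hM : IsMatching M)
    (hB : ∀ p ∈ M, p.1 < (pforest (hldForest F)).length ∧
        p.2 < (pforest (hldForest G)).length)
    (hEq : ∀ p ∈ M,
        (pforest (hldForest F)).getD p.1 (hldDflt α) =
          (pforest (hldForest G)).getD p.2 (hldDflt α))
    (hC : MaxChain (hldForest F) (hldForest G) M (hldDflt α) C) :
    (AlignedAt (C.getD (C.length - 1) d0).1 M
        (posOf (hldForest F) (hldForest G) (C.getD (C.length - 1) d0)).1 ∧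
      ¬ AlignedAt (C.getD (C.length - 1) d0).1 M
        (posOf (hldForest F) (hldForest G) (C.getD (C.length - 1) d0)).2) ∨
    (¬ AlignedAt (C.getD (C.length - 1) d0).1 M
        (posOf (hldForest F) (hldForest G) (C.getD (C.length - 1) d0)).1 ∧
      AlignedAt (C.getD (C.length - 1) d0).1 M
        (posOf (hldForest F) (hldForest G) (C.getD (C.length - 1) d0)).2) := by
  obtain ⟨hCcore, hnoapp, _⟩ := hC
  obtain ⟨⟨hlen, hval, halt, hcond⟩, hancC⟩ := hCcore
  have hCcore : ChainCore (hldForest F) (hldForest G) M (hldDflt α) C :=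
    ⟨⟨hlen, hval, halt, hcond⟩, hancC⟩
  set HF := hldForest F with hHF
  set HG := hldForest G with hHG
  set dd := hldDflt α with hdd
  set w := C.getD (C.length - 1) d0 with hw_def
  set u := C.getD (C.length - 2) d0 with hu_def
  set t := C.getD (C.length - 3) d0 with ht_def
  have e1 : C.length - 2 + 1 = C.length - 1 := by omega
  have e2 : C.length - 3 + 1 = C.length - 2 := by omega
  have e3 : C.length - 3 + 2 = C.length - 1 := by omega
  have e4 : C.length - 1 - 1 = C.length - 2 := by omega
  have e5 : C.length - 2 - 1 = C.length - 3 := by omega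
  -- memberships
  have hmem : ∀ k, k < C.length → C.getD k d0 ∈ C := by
    intro k hk
    rw [List.getD_eq_getElem _ _ hk]
    exact List.getElem_mem hk
  have hvw := hval w (hw_def ▸ hmem _ (by omega))
  have hvu := hval u (hu_def ▸ hmem _ (by omega))
  have hvt := hval t (ht_def ▸ hmem _ (by omega))
  obtain ⟨⟨ow, cw⟩, hfw⟩ := Option.isSome_iff_exists.1 hvw
  obtain ⟨⟨ou, cu⟩, hfu⟩ := Option.isSome_iff_exists.1 hvu
  obtain ⟨⟨ot, ct⟩, hft⟩ := Option.isSome_iff_exists.1 hvt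
  have hposw : posOf HF HG w = (ow, cw) := by simp [posOf, hfw]
  have hposu : posOf HF HG u = (ou, cu) := by simp [posOf, hfu]
  have hpost : posOf HF HG t = (ot, ct) := by simp [posOf, hft]
  -- sides
  have hsuw : u.1 ≠ w.1 := by
    have := halt (C.length - 2) (by omega)
    rw [e1, ← hw_def, ← hu_def] at this
    exact this
  have hstu : t.1 ≠ u.1 := by
    have := halt (C.length - 3) (by omega)
    rw [e2, ← hu_def, ← ht_def] at this
    exact this
  have htw : t.1 = w.1 := by
    revert hsuw hstu; cases t.1 <;> cases u.1 <;> cases w.1 <;> simp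
  -- ancestor t ≺ w
  have hancTW : t.2 <+: w.2 ∧ t.2 ≠ w.2 := by
    have := hancC (C.length - 3) (by omega)
    rw [e3, ← hw_def, ← ht_def] at this
    exact this
  have hft' : fpos (if w.1 then HF else HG) t.2 = some (ot, ct) := by
    rw [← htw]; exact hft
  have hmono := fpos_mono (if w.1 then HF else HG) t.2 w.2 ot ct ow cw hft' hfw
    hancTW.1 hancTW.2
  have howcw : ow < cw := (fpos_spec _ _ _ _ dd hfw).1
  rcases hcond with hop | hcl
  · by_cases hw1 : w.1 = true
    · -- opening chain, last node in F
      have hu1 : u.1 = false := by revert hsuw; rw [hw1]; cases u.1 <;> simp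
      have ht1 : t.1 = true := htw.trans hw1
      have hfwF : fpos HF w.2 = some (ow, cw) := by rw [hw1] at hfw; simpa using hfw
      have hfuG : fpos HG u.2 = some (ou, cu) := by rw [hu1] at hfu; simpa using hfu
      have hftF : fpos HF t.2 = some (ot, ct) := by rw [ht1] at hft; simpa using hft
      -- closing paren of w is aligned
      have hm1 : MatchedEq HF HG M dd (posOf HF HG w).2 (posOf HF HG u).2 := by
        have := (hop (C.length - 1) (by omega) (by rw [← hw_def]; exact hw1)).2 (by omega)
        rw [e4, ← hw_def, ← hu_def] at this
        exact this
      rw [hposw, hposu] at hm1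
      have hm1' : MatchedEq HF HG M dd cw cu := hm1
      have hm2 : MatchedEq HF HG M dd (posOf HF HG t).1 (posOf HF HG u).1 := by
        have := (hop (C.length - 3) (by omega) (by rw [← ht_def]; exact ht1)).1 (by omega)
        rw [e2, ← ht_def, ← hu_def] at this
        exact this
      rw [hpost, hposu] at hm2
      have hm2' : MatchedEq HF HG M dd ot ou := hm2
      refine Or.inr ⟨?_, ?_⟩
      · -- opening paren of w is not aligned
        intro hA
        rw [hposw, hw1] at hA
        simp only [AlignedAt, if_true] at hA
        obtain ⟨q, hq⟩ := hA
        -- q is the opening parenthesis of a node av of HG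
        obtain ⟨_, hcwlen, lbl, hchow, hchcw⟩ := fpos_spec HF w.2 ow cw dd hfwF
        have hqchar : (pforest HG).getD q dd = (true, lbl) := by
          rw [← hEq (ow, q) hq]; exact hchow
        have hqlen : q < (pforest HG).length := (hB (ow, q) hq).2
        obtain ⟨av, cv', hfav⟩ := (fchar_pos HG dd q hqlen).1 (by rw [hqchar])
        -- monotonicity
        have mono1 : ou < q := (match_mono hM hm2'.1 hq).1 (by omega)
        have mono2 : q < cu := (match_mono hM hq hm1'.1).1 howcw
        have hnest := fnest HG u.2 av ou cu q cv' hfuG hfav (Or.inl ⟨mono1, mono2⟩)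
        -- extension contradicts maximality
        refine hnoapp ⟨(false, av), ?_⟩
        refine chaincore_append hCcore (false, av) ?_ ?_ ?_ ?_
        · show w.1 ≠ (false, av).1
          rw [hw1]; simp
        · simp [hfav]
        · exact hnest
        · refine Or.inl (open_append hop (by omega) ?_ ?_)
          · intro _
            have hposv : posOf HF HG (false, av) = (q, cv') := by simp [posOf, hfav]
            show MatchedEq HF HG M dd (posOf HF HG w).1 (posOf HF HG (false, av)).1
            rw [hposw, hposv]
            exact ⟨hq, hEq (ow, q) hq⟩
          · intro h; simp at h
      · rw [hposw, hw1]
        simp only [AlignedAt, if_true]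
        exact ⟨cu, hm1'.1⟩
    · -- opening chain, last node in G
      have hw0 : w.1 = false := by revert hw1; cases w.1 <;> simp
      have hu1 : u.1 = true := by revert hsuw; rw [hw0]; cases u.1 <;> simp
      have ht1 : t.1 = false := htw.trans hw0
      have hfwG : fpos HG w.2 = some (ow, cw) := by rw [hw0] at hfw; simpa using hfw
      have hfuF : fpos HF u.2 = some (ou, cu) := by rw [hu1] at hfu; simpa using hfu
      have hm1 : MatchedEq HF HG M dd (posOf HF HG u).1 (posOf HF HG w).1 := by
        have := (hop (C.length - 2) (by omega) (by rw [← hu_def]; exact hu1)).1 (by omega)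
        rw [e1, ← hw_def, ← hu_def] at this
        exact this
      rw [hposw, hposu] at hm1
      have hm1' : MatchedEq HF HG M dd ou ow := hm1
      have hm2 : MatchedEq HF HG M dd (posOf HF HG u).2 (posOf HF HG t).2 := by
        have := (hop (C.length - 2) (by omega) (by rw [← hu_def]; exact hu1)).2 (by omega)
        rw [e5, ← ht_def, ← hu_def] at this
        exact this
      rw [hpost, hposu] at hm2
      have hm2' : MatchedEq HF HG M dd cu ct := hm2
      refine Or.inl ⟨?_, ?_⟩
      · rw [hposw, hw0]
        simp only [AlignedAt, Bool.false_eq_true, if_false]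
        exact ⟨ou, hm1'.1⟩
      · intro hA
        rw [hposw, hw0] at hA
        simp only [AlignedAt, Bool.false_eq_true, if_false] at hA
        obtain ⟨i, hi⟩ := hA
        obtain ⟨_, hcwlen, lbl, hchow, hchcw⟩ := fpos_spec HG w.2 ow cw dd hfwG
        have hichar : (pforest HF).getD i dd = (false, lbl) := by
          rw [hEq (i, cw) hi]; exact hchcw
        have hilen : i < (pforest HF).length := (hB (i, cw) hi).1
        obtain ⟨av, ov, hfav⟩ := (fchar_pos HF dd i hilen).2 (by rw [hichar])
        have mono1 : ou < i := (match_mono hM hm1'.1 hi).2 howcw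
        have mono2 : i < cu := (match_mono hM hi hm2'.1).2 hmono.2
        have hnest := fnest HF u.2 av ou cu ov i hfuF hfav (Or.inr ⟨mono1, mono2⟩)
        refine hnoapp ⟨(true, av), ?_⟩
        refine chaincore_append hCcore (true, av) ?_ ?_ ?_ ?_
        · show w.1 ≠ (true, av).1
          rw [hw0]; simp
        · simp [hfav]
        · exact hnest
        · refine Or.inl (open_append hop (by omega) ?_ ?_)
          · intro h
            exact absurd (show w.1 = true from h) (by rw [hw0]; simp)
          · intro _
            have hposv : posOf HF HG (true, av) = (ov, i) := by simp [posOf, hfav]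
            show MatchedEq HF HG M dd (posOf HF HG (true, av)).2 (posOf HF HG w).2
            rw [hposw, hposv]
            exact ⟨hi, hEq (i, cw) hi⟩
  · by_cases hw1 : w.1 = true
    · -- closing chain, last node in F
      have hu1 : u.1 = false := by revert hsuw; rw [hw1]; cases u.1 <;> simp
      have ht1 : t.1 = true := htw.trans hw1
      have hfwF : fpos HF w.2 = some (ow, cw) := by rw [hw1] at hfw; simpa using hfw
      have hfuG : fpos HG u.2 = some (ou, cu) := by rw [hu1] at hfu; simpa using hfu
      have hm1 : MatchedEq HF HG M dd (posOf HF HG w).1 (posOf HF HG u).1 := by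
        have := (hcl (C.length - 1) (by omega) (by rw [← hw_def]; exact hw1)).2 (by omega)
        rw [e4, ← hw_def, ← hu_def] at this
        exact this
      rw [hposw, hposu] at hm1
      have hm1' : MatchedEq HF HG M dd ow ou := hm1
      have hm2 : MatchedEq HF HG M dd (posOf HF HG t).2 (posOf HF HG u).2 := by
        have := (hcl (C.length - 3) (by omega) (by rw [← ht_def]; exact ht1)).1 (by omega)
        rw [e2, ← ht_def, ← hu_def] at this
        exact this
      rw [hpost, hposu] at hm2
      have hm2' : MatchedEq HF HG M dd ct cu := hm2
      refine Or.inl ⟨?_, ?_⟩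
      · rw [hposw, hw1]
        simp only [AlignedAt, if_true]
        exact ⟨ou, hm1'.1⟩
      · intro hA
        rw [hposw, hw1] at hA
        simp only [AlignedAt, if_true] at hA
        obtain ⟨q, hq⟩ := hA
        obtain ⟨_, hcwlen, lbl, hchow, hchcw⟩ := fpos_spec HF w.2 ow cw dd hfwF
        have hqchar : (pforest HG).getD q dd = (false, lbl) := by
          rw [← hEq (cw, q) hq]; exact hchcw
        have hqlen : q < (pforest HG).length := (hB (cw, q) hq).2
        obtain ⟨av, ov, hfav⟩ := (fchar_pos HG dd q hqlen).2 (by rw [hqchar])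
        have mono1 : ou < q := (match_mono hM hm1'.1 hq).1 howcw
        have mono2 : q < cu := (match_mono hM hq hm2'.1).1 hmono.2
        have hnest := fnest HG u.2 av ou cu ov q hfuG hfav (Or.inr ⟨mono1, mono2⟩)
        refine hnoapp ⟨(false, av), ?_⟩
        refine chaincore_append hCcore (false, av) ?_ ?_ ?_ ?_
        · show w.1 ≠ (false, av).1
          rw [hw1]; simp
        · simp [hfav]
        · exact hnest
        · refine Or.inr (close_append hcl (by omega) ?_ ?_)
          · intro _
            have hposv : posOf HF HG (false, av) = (ov, q) := by simp [posOf, hfav]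
            show MatchedEq HF HG M dd (posOf HF HG w).2 (posOf HF HG (false, av)).2
            rw [hposw, hposv]
            exact ⟨hq, hEq (cw, q) hq⟩
          · intro h; simp at h
    · -- closing chain, last node in G
      have hw0 : w.1 = false := by revert hw1; cases w.1 <;> simp
      have hu1 : u.1 = true := by revert hsuw; rw [hw0]; cases u.1 <;> simp
      have ht1 : t.1 = false := htw.trans hw0
      have hfwG : fpos HG w.2 = some (ow, cw) := by rw [hw0] at hfw; simpa using hfw
      have hfuF : fpos HF u.2 = some (ou, cu) := by rw [hu1] at hfu; simpa using hfu
      have hm1 : MatchedEq HF HG M dd (posOf HF HG u).2 (posOf HF HG w).2 := by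
        have := (hcl (C.length - 2) (by omega) (by rw [← hu_def]; exact hu1)).1 (by omega)
        rw [e1, ← hw_def, ← hu_def] at this
        exact this
      rw [hposw, hposu] at hm1
      have hm1' : MatchedEq HF HG M dd cu cw := hm1
      have hm2 : MatchedEq HF HG M dd (posOf HF HG u).1 (posOf HF HG t).1 := by
        have := (hcl (C.length - 2) (by omega) (by rw [← hu_def]; exact hu1)).2 (by omega)
        rw [e5, ← ht_def, ← hu_def] at this
        exact this
      rw [hpost, hposu] at hm2
      have hm2' : MatchedEq HF HG M dd ou ot := hm2
      refine Or.inr ⟨?_, ?_⟩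
      · intro hA
        rw [hposw, hw0] at hA
        simp only [AlignedAt, Bool.false_eq_true, if_false] at hA
        obtain ⟨i, hi⟩ := hA
        obtain ⟨_, hcwlen, lbl, hchow, hchcw⟩ := fpos_spec HG w.2 ow cw dd hfwG
        have hichar : (pforest HF).getD i dd = (true, lbl) := by
          rw [hEq (i, ow) hi]; exact hchow
        have hilen : i < (pforest HF).length := (hB (i, ow) hi).1
        obtain ⟨av, cv', hfav⟩ := (fchar_pos HF dd i hilen).1 (by rw [hichar])
        have mono1 : ou < i := (match_mono hM hm2'.1 hi).2 hmono.1
        have mono2 : i < cu := (match_mono hM hi hm1'.1).2 howcw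
        have hnest := fnest HF u.2 av ou cu i cv' hfuF hfav (Or.inl ⟨mono1, mono2⟩)
        refine hnoapp ⟨(true, av), ?_⟩
        refine chaincore_append hCcore (true, av) ?_ ?_ ?_ ?_
        · show w.1 ≠ (true, av).1
          rw [hw0]; simp
        · simp [hfav]
        · exact hnest
        · refine Or.inr (close_append hcl (by omega) ?_ ?_)
          · intro h
            exact absurd (show w.1 = true from h) (by rw [hw0]; simp)
          · intro _
            have hposv : posOf HF HG (true, av) = (i, cv') := by simp [posOf, hfav]
            show MatchedEq HF HG M dd (posOf HF HG (true, av)).1 (posOf HF HG w).1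
            rw [hposw, hposv]
            exact ⟨hi, hEq (i, ow) hi⟩
      · rw [hposw, hw0]
        simp only [AlignedAt, Bool.false_eq_true, if_false]
        exact ⟨cu, hm1'.1⟩
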